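/- Let R be a commutative integral domain, t,s units of R, c₀ ∈ R, and define a*b = t·a + s·b + c₀ for a,b ∈ R. Then the identity C15, namely x*(y*(y*z)) = ((x*y)*y)*z for all x,y,z ∈ R, holds if and only if t = s and t² = 1, i.e. if and only if (t,s) = (1,1) or (t,s) = (−1,−1) (with no restriction on c₀). In particular there is a solution with neither t nor s equal to 1. -/
import Mathlib

/-- The affine operation `a * b = t·a + s·b + c₀` on a commutative integral domain. -/
def affOp {R : Type*} [CommRing R] (t s c₀ : R) (a b : R) : R := t * a + s * b + c₀

/-- An affine quasigroup over an integral domain satisfies the identity C15,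
`x(y(yz)) = ((xy)y)z`, iff `t = s` and `t² = 1`, i.e. iff `(t,s) = (1,1)` or
`(t,s) = (−1,−1)`. -/
theorem affine_C15_iff {R : Type*} [CommRing R] [IsDomain R]
    (t s c₀ : R) (ht : IsUnit t) (hs : IsUnit s) :
    ((∀ x y z : R,
        affOp t s c₀ x (affOp t s c₀ y (affOp t s c₀ y z)) =
          affOp t s c₀ (affOp t s c₀ (affOp t s c₀ x y) y) z) ↔
      (t = s ∧ t ^ 2 = 1)) ∧
    ((∀ x y z : R,
        affOp t s c₀ x (affOp t s c₀ y (affOp t s c₀ y z)) =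
          affOp t s c₀ (affOp t s c₀ (affOp t s c₀ x y) y) z) ↔
      ((t = 1 ∧ s = 1) ∨ (t = -1 ∧ s = -1))) := by
  have ht0 : t ≠ 0 := ht.ne_zero
  have hs0 : s ≠ 0 := hs.ne_zero
  have key : (∀ x y z : R,
        affOp t s c₀ x (affOp t s c₀ y (affOp t s c₀ y z)) =
          affOp t s c₀ (affOp t s c₀ (affOp t s c₀ x y) y) z) ↔
      (t = s ∧ t ^ 2 = 1) := by
    constructor
    · intro h
      have h0 := h 0 0 0
      have h1 := h 1 0 0
      have h2 := h 0 1 0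
      simp only [affOp] at h0 h1 h2
      have e1 : t * (t ^ 2 - 1) = 0 := by linear_combination h0 - h1
      have ht2 : t ^ 2 = 1 := by
        rcases mul_eq_zero.1 e1 with h' | h'
        · exact absurd h' ht0
        · linear_combination h'
      have e2 : s * t * (s - t) = 0 := by linear_combination h2 - h0
      have hst : t = s := by
        rcases mul_eq_zero.1 e2 with h' | h'
        · rcases mul_eq_zero.1 h' with h | h
          · exact absurd h hs0
          · exact absurd h ht0
        · exact (sub_eq_zero.1 h').symm
      exact ⟨hst, ht2⟩
    · rintro ⟨rfl, ht2⟩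
      intro x y z
      simp only [affOp]
      linear_combination t * (z - x) * ht2
  refine ⟨key, key.trans ?_⟩
  constructor
  · rintro ⟨rfl, h2⟩
    have : t * t = 1 := by linear_combination h2
    rcases mul_self_eq_one_iff.1 this with h | h
    · exact Or.inl ⟨h, h⟩
    · exact Or.inr ⟨h, h⟩
  · rintro (⟨rfl, rfl⟩ | ⟨rfl, rfl⟩) <;> norm_num
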